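/- Let Z_1, ..., Z_T be the B-DISTIL normalizers with log Z_t ≤ -η·γ_t + η²G² for each t, and suppose the weights satisfy 0 < K_{T+1}⁺ i ≤ 1 with K_1⁺ i = 1/(2N) and K_{T+1}⁺ i = K_1⁺ i · exp(-η·T·(F_T(x_i) - g(x_i)))/∏_t Z_t. Then -η·T·(F_T(x_i) - g(x_i)) ≤ ln(2N) + η²TG² - η·∑_{t=1}^T γ_t. -/

import Mathlib

open Finset in
theorem one_sided_residual_bound (N T : ℕ) (hN : 1 ≤ N) (hT : 1 ≤ T)
    (η G r KT1 : ℝ) (Z γ : ℕ → ℝ)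
    (hG : 0 < G) (hη : 0 < η) (hηG : η ≤ 1 / G)
    (hZpos : ∀ t ∈ Finset.Icc 1 T, 0 < Z t)
    (hlogZ : ∀ t ∈ Finset.Icc 1 T, Real.log (Z t) ≤ -η * γ t + η ^ 2 * G ^ 2)
    (hKpos : 0 < KT1) (hKle : KT1 ≤ 1)
    (hK : KT1 = (1 / (2 * N)) * Real.exp (-η * T * r) / ∏ t ∈ Finset.Icc 1 T, Z t) :
    -η * T * r ≤ Real.log (2 * N) + η ^ 2 * T * G ^ 2 -
      η * ∑ t ∈ Finset.Icc 1 T, γ t := by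
  have hprod : (0:ℝ) < ∏ t ∈ Finset.Icc 1 T, Z t := Finset.prod_pos hZpos
  have hNpos : (0:ℝ) < 2 * N := by positivity
  have hexp : Real.exp (-η * T * r) ≤ 2 * N * ∏ t ∈ Finset.Icc 1 T, Z t := by
    rw [hK] at hKle
    rw [div_le_one hprod] at hKle
    calc Real.exp (-η * T * r)
        = (2 * N) * ((1 / (2 * N)) * Real.exp (-η * T * r)) := by
          field_simp
      _ ≤ 2 * N * ∏ t ∈ Finset.Icc 1 T, Z t := by
          exact mul_le_mul_of_nonneg_left hKle (le_of_lt hNpos)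
  have h1 : -η * T * r ≤ Real.log (2 * N * ∏ t ∈ Finset.Icc 1 T, Z t) := by
    have := Real.log_le_log (Real.exp_pos _) hexp
    rwa [Real.log_exp] at this
  have h2 : Real.log (2 * N * ∏ t ∈ Finset.Icc 1 T, Z t)
      = Real.log (2 * N) + ∑ t ∈ Finset.Icc 1 T, Real.log (Z t) := by
    rw [Real.log_mul (ne_of_gt hNpos) (ne_of_gt hprod),
      Real.log_prod (fun t ht => ne_of_gt (hZpos t ht))]
  have h3 : ∑ t ∈ Finset.Icc 1 T, Real.log (Z t)
      ≤ ∑ t ∈ Finset.Icc 1 T, (-η * γ t + η ^ 2 * G ^ 2) :=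
    Finset.sum_le_sum hlogZ
  have h4 : ∑ t ∈ Finset.Icc 1 T, (-η * γ t + η ^ 2 * G ^ 2)
      = η ^ 2 * T * G ^ 2 - η * ∑ t ∈ Finset.Icc 1 T, γ t := by
    rw [Finset.sum_add_distrib, Finset.sum_const, Nat.card_Icc]
    simp [Finset.mul_sum]
    ring
  linarith [h1, h3, h2 ▸ h1]
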